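/- Fix a finite set I of students, a finite set S of schools, schools' preferences, quotas, and a student acquaintance graph G of treewidth at most k. Then there exists a mechanism (a function assigning a feasible matching to every profile of students' strict linear orders on S ∪ {∅}) that is strategyproof and whose output matching is Pareto efficient and locally EF-k for every profile of students' preferences. -/

import Mathlib

set_option linter.unusedSectionVars false
set_option linter.unusedVariables false


section Defs

variable {I S : Type*}

/-- Students' preference profiles: `pI i a b` means student `i` strictly prefers option `a`
to option `b`, where `none` represents being unmatched. -/
abbrev StudentPrefs (I S : Type*) := I → Option S → Option S → Prop

/-- Schools' preference profiles: `pS s a b` means school `s` strictly prefers `a` to `b`,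
where `none` represents leaving a seat vacant. -/
abbrev SchoolPrefs (I S : Type*) := S → Option I → Option I → Prop

/-- Each student's preference is a strict linear order on `S ∪ {∅}`. -/
def ValidStudentPrefs (pI : StudentPrefs I S) : Prop :=
  ∀ i, IsStrictTotalOrder (Option S) (pI i)

/-- Each school's preference is a strict linear order on `I ∪ {∅}`. -/
def ValidSchoolPrefs (pS : SchoolPrefs I S) : Prop :=
  ∀ s, IsStrictTotalOrder (Option I) (pS s)

/-- A matching `μ : I → Option S` is feasible if each school's quota is respected. -/
def Feasible (q : S → ℕ) (μ : I → Option S) : Prop :=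
  ∀ s : S, {i | μ i = some s}.ncard ≤ q s

/-- Student `i` has justified envy toward student `i'` in matching `μ`. -/
def JEnvy (pI : StudentPrefs I S) (pS : SchoolPrefs I S)
    (μ : I → Option S) (i i' : I) : Prop :=
  ∃ s : S, μ i' = some s ∧ pI i (some s) (μ i) ∧ pS s (some i) (some i')

/-- Local envy: justified envy toward a neighbor in the student acquaintance graph `G`. -/
def LocalEnvy (G : SimpleGraph I) (pI : StudentPrefs I S) (pS : SchoolPrefs I S)
    (μ : I → Option S) (i i' : I) : Prop :=
  JEnvy pI pS μ i i' ∧ G.Adj i i'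

/-- Locally envy-free matching. -/
def LEF (G : SimpleGraph I) (pI : StudentPrefs I S) (pS : SchoolPrefs I S)
    (μ : I → Option S) : Prop :=
  ∀ i i', ¬ LocalEnvy G pI pS μ i i'

/-- Fair (justified-envy-free) matching. -/
def Fair (pI : StudentPrefs I S) (pS : SchoolPrefs I S) (μ : I → Option S) : Prop :=
  ∀ i i', ¬ JEnvy pI pS μ i i'

/-- Locally envy-free up to `k` peers: every student has local envy toward at most `k` students. -/
def LocEF (G : SimpleGraph I) (pI : StudentPrefs I S) (pS : SchoolPrefs I S)
    (k : ℕ) (μ : I → Option S) : Prop :=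
  ∀ i, {i' | LocalEnvy G pI pS μ i i'}.ncard ≤ k

/-- Locally envy-receiving-free up to `k` peers: for every student at most `k` students
have local envy toward her. -/
def LocERF (G : SimpleGraph I) (pI : StudentPrefs I S) (pS : SchoolPrefs I S)
    (k : ℕ) (μ : I → Option S) : Prop :=
  ∀ i, {i' | LocalEnvy G pI pS μ i' i}.ncard ≤ k

/-- `μ'` Pareto dominates `μ`. -/
def Dominates (pI : StudentPrefs I S) (μ' μ : I → Option S) : Prop :=
  (∀ i, μ' i = μ i ∨ pI i (μ' i) (μ i)) ∧ (∃ i, pI i (μ' i) (μ i))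

/-- A feasible matching is Pareto efficient if no feasible matching Pareto dominates it. -/
def ParetoEfficient (pI : StudentPrefs I S) (q : S → ℕ) (μ : I → Option S) : Prop :=
  ∀ μ', Feasible q μ' → ¬ Dominates pI μ' μ

/-- `(i, s)` is a mutually-best pair. -/
def MBPair (pI : StudentPrefs I S) (pS : SchoolPrefs I S) (i : I) (s : S) : Prop :=
  (∀ x : Option S, x ≠ some s → pI i (some s) x) ∧
  (∀ y : Option I, y ≠ some i → pS s (some i) y)

/-- A matching is mutually-best if every mutually-best pair is matched. -/
def MutuallyBest (pI : StudentPrefs I S) (pS : SchoolPrefs I S) (μ : I → Option S) : Prop :=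
  ∀ i s, MBPair pI pS i s → μ i = some s

/-- The set of the `m` most-preferred elements under a strict order `r`
(`r j i` meaning `j` is strictly preferred to `i`). -/
def topSet (r : I → I → Prop) (m : ℕ) : Set I := {i | {j | r j i}.ncard < m}

/-- A strict linear order on `I` is single-peaked on the graph `G` if for each
`m ∈ {1, …, |I|}` the set of the `m` most-preferred elements induces a connected
subgraph of `G`. -/
def SinglePeakedOn (G : SimpleGraph I) (r : I → I → Prop) : Prop :=
  ∀ m : ℕ, 1 ≤ m → m ≤ Nat.card I → (G.induce (topSet r m)).Connected

/-- `(T, bag)` is a tree decomposition of `G`. -/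
structure IsTreeDecomp {V : Type*} (G : SimpleGraph I) (T : SimpleGraph V)
    (bag : V → Set I) : Prop where
  tree : T.IsTree
  covers : ∀ i : I, ∃ t, i ∈ bag t
  subtree : ∀ i : I, (T.induce {t | i ∈ bag t}).Connected
  edges : ∀ ⦃i i' : I⦄, G.Adj i i' → ∃ t, i ∈ bag t ∧ i' ∈ bag t

/-- `G` has treewidth at most `k`: it admits a tree decomposition of width at most `k`. -/
def TreewidthAtMost (G : SimpleGraph I) (k : ℕ) : Prop :=
  ∃ (V : Type) (T : SimpleGraph V) (bag : V → Set I),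
    Finite V ∧ IsTreeDecomp G T bag ∧ ∀ t, (bag t).ncard ≤ k + 1

/-- `G` is `k`-degenerate: there is a linear ordering of the vertices (an injection
into `ℕ`) such that every vertex has at most `k` neighbors occurring strictly later. -/
def Degenerate (G : SimpleGraph I) (k : ℕ) : Prop :=
  ∃ ord : I → ℕ, Function.Injective ord ∧
    ∀ i, {i' | G.Adj i i' ∧ ord i < ord i'}.ncard ≤ k

/-- The first index `j` in the list `L` of bags such that `i ∈ bag (L.get j)`. -/
noncomputable def firstBagIdx {V : Type*} (L : List V) (bag : V → Set I) (i : I) : ℕ :=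
  sInf {j | ∃ h : j < L.length, i ∈ bag (L.get ⟨j, h⟩)}

/-- A strict linear order on `I` is single-peaked on a tree decomposition `(T, bag)` if
there is a sequence of nodes covering all vertices, each node after the first adjacent in
`T` to an earlier one, such that vertices first covered earlier are preferred. -/
def SinglePeakedOnTD {V : Type*} (T : SimpleGraph V) (bag : V → Set I)
    (r : I → I → Prop) : Prop :=
  ∃ L : List V,
    (∀ i : I, ∃ j : ℕ, ∃ h : j < L.length, i ∈ bag (L.get ⟨j, h⟩)) ∧
    (∀ j : ℕ, ∀ h : j < L.length, 1 ≤ j →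
      ∃ j' : ℕ, ∃ h' : j' < L.length, j' < j ∧ T.Adj (L.get ⟨j', h'⟩) (L.get ⟨j, h⟩)) ∧
    (∀ i i' : I, firstBagIdx L bag i < firstBagIdx L bag i' → r i i')

/-- `(i, s)` is a blocking pair for the feasible matching `μ`. -/
def BlockingPair (pI : StudentPrefs I S) (pS : SchoolPrefs I S) (q : S → ℕ)
    (μ : I → Option S) (i : I) (s : S) : Prop :=
  μ i ≠ some s ∧ pI i (some s) (μ i) ∧
  (({i' | μ i' = some s}.ncard < q s ∧ pS s (some i) none) ∨
   ({i' | μ i' = some s}.ncard = q s ∧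
     ∃ i₀, μ i₀ = some s ∧
       (∀ i₁, μ i₁ = some s → i₁ = i₀ ∨ pS s (some i₁) (some i₀)) ∧
       pS s (some i) (some i₀)))

/-- A matching is locally stable if for every blocking pair `(i, s)`, no neighbor of `i`
is matched to `s`. -/
def LocallyStable (G : SimpleGraph I) (pI : StudentPrefs I S) (pS : SchoolPrefs I S)
    (q : S → ℕ) (μ : I → Option S) : Prop :=
  ∀ i s, BlockingPair pI pS q μ i s → ∀ i', G.Adj i i' → μ i' ≠ some s

/-- Strategyproofness of a mechanism `f` (the schools' side being fixed). -/
def Strategyproof (f : StudentPrefs I S → (I → Option S)) : Prop :=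
  ∀ pI : StudentPrefs I S, ValidStudentPrefs pI → ∀ i : I,
    ∀ pI' : StudentPrefs I S, ValidStudentPrefs pI' →
      (∀ i'' : I, i'' ≠ i → pI' i'' = pI i'') →
      f pI i = f pI' i ∨ pI i (f pI i) (f pI' i)

end Defs

section MyTree
open SimpleGraph
variable {V : Type*} {T : SimpleGraph V}



lemma myGetVertInj {u v : V} {p : T.Walk u v} (hp : p.IsPath) :
    ∀ i ≤ p.length, ∀ j ≤ p.length, p.getVert i = p.getVert j → i = j := by
  induction p with
  | nil => intro i hi j hj _; simp only [SimpleGraph.Walk.length_nil, Nat.le_zero] at hi hj; omega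
  | @cons a b c h q ih =>
    rw [SimpleGraph.Walk.cons_isPath_iff] at hp
    intro i hi j hj hij
    match i, j with
    | 0, 0 => rfl
    | 0, j+1 =>
      exfalso; apply hp.2
      rw [SimpleGraph.Walk.getVert_zero, SimpleGraph.Walk.getVert_cons_succ] at hij
      rw [SimpleGraph.Walk.mem_support_iff_exists_getVert]
      exact ⟨j, hij.symm, by simpa using hj⟩
    | i+1, 0 =>
      exfalso; apply hp.2
      rw [SimpleGraph.Walk.getVert_zero, SimpleGraph.Walk.getVert_cons_succ] at hij
      rw [SimpleGraph.Walk.mem_support_iff_exists_getVert]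
      exact ⟨i, hij, by simpa using hi⟩
    | i+1, j+1 =>
      rw [SimpleGraph.Walk.getVert_cons_succ, SimpleGraph.Walk.getVert_cons_succ] at hij
      have := ih hp.1 i (by simpa using hi) j (by simpa using hj) hij
      omega

lemma myIsPathConcat {a b c : V} {p : T.Walk a b} (hp : p.IsPath) (h : T.Adj b c)
    (hc : c ∉ p.support) : (p.concat h).IsPath := by
  have h1 : (SimpleGraph.Walk.cons h.symm p.reverse).IsPath := by
    rw [SimpleGraph.Walk.cons_isPath_iff]
    exact ⟨hp.reverse, by simpa using hc⟩
  have h2 := h1.reverse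
  have h3 : (SimpleGraph.Walk.cons h.symm p.reverse).reverse = p.concat h := by
    simp [SimpleGraph.Walk.concat, SimpleGraph.Walk.reverse_cons]
  rwa [h3] at h2


/-- Adjacent vertices in a tree are at distinct distances from any root, differing by one. -/
lemma myAdjDist (hT : T.IsTree) (r : V) {u v : V} (h : T.Adj u v) :
    T.dist r v + 1 = T.dist r u ∨ T.dist r u + 1 = T.dist r v := by
  classical
  have hc := hT.isConnected
  have h1 : T.dist r v ≤ T.dist r u + 1 := by
    have := hc.dist_triangle (u := r) (v := u) (w := v)
    rwa [(SimpleGraph.dist_eq_one_iff_adj).2 h] at this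
  have h2 : T.dist r u ≤ T.dist r v + 1 := by
    have := hc.dist_triangle (u := r) (v := v) (w := u)
    rwa [(SimpleGraph.dist_eq_one_iff_adj).2 h.symm] at this
  have hne : T.dist r u ≠ T.dist r v := by
    intro heq
    obtain ⟨p, hp⟩ := hc.exists_walk_length_eq_dist r u
    have hpPath : p.IsPath := p.isPath_of_length_eq_dist hp
    obtain ⟨qw, hq⟩ := hc.exists_walk_length_eq_dist r v
    have hqPath : qw.IsPath := qw.isPath_of_length_eq_dist hq
    have hvns : v ∉ p.support := by
      intro hv
      have hℓ : T.dist r v ≤ (p.takeUntil v hv).length := SimpleGraph.dist_le _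
      have hdrop : 1 ≤ (p.dropUntil v hv).length := by
        have : T.dist v u ≤ (p.dropUntil v hv).length := SimpleGraph.dist_le _
        have hpos : 0 < T.dist v u := hc.pos_dist_of_ne h.ne'
        omega
      have hsum : (p.takeUntil v hv).length + (p.dropUntil v hv).length = p.length := by
        rw [← SimpleGraph.Walk.length_append, SimpleGraph.Walk.take_spec]
      omega
    have hconcat : (p.concat h).IsPath := myIsPathConcat hpPath h hvns
    have := hT.IsAcyclic.path_unique ⟨p.concat h, hconcat⟩ ⟨qw, hqPath⟩
    have hlen : (p.concat h).length = qw.length := by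
      rw [show (p.concat h) = qw from congrArg Subtype.val this]
    rw [SimpleGraph.Walk.length_concat] at hlen
    omega
  omega

/-- unique parent: two neighbors of x at distance (dist x) - 1 coincide -/
lemma myParentUniq (hT : T.IsTree) (r : V) {x u v : V} (hu : T.Adj u x) (hv : T.Adj v x)
    (du : T.dist r u + 1 = T.dist r x) (dv : T.dist r v + 1 = T.dist r x) : u = v := by
  have hc := hT.isConnected
  obtain ⟨p, hp⟩ := hc.exists_walk_length_eq_dist r u
  obtain ⟨qw, hq⟩ := hc.exists_walk_length_eq_dist r v
  have hp1 : (p.concat hu).IsPath := by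
    apply SimpleGraph.Walk.isPath_of_length_eq_dist
    rw [SimpleGraph.Walk.length_concat, hp, du]
  have hq1 : (qw.concat hv).IsPath := by
    apply SimpleGraph.Walk.isPath_of_length_eq_dist
    rw [SimpleGraph.Walk.length_concat, hq, dv]
  have heq : p.concat hu = qw.concat hv := by
    have := hT.IsAcyclic.path_unique ⟨p.concat hu, hp1⟩ ⟨qw.concat hv, hq1⟩
    exact congrArg Subtype.val this
  have h1 : (p.concat hu).getVert (T.dist r u) = u := by
    rw [SimpleGraph.Walk.concat, SimpleGraph.Walk.getVert_append]
    simp [hp]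
  have h2 : (qw.concat hv).getVert (T.dist r v) = v := by
    rw [SimpleGraph.Walk.concat, SimpleGraph.Walk.getVert_append]
    simp [hq]
  have hdd : T.dist r u = T.dist r v := by omega
  rw [← h1, heq, hdd, h2]
/-- distances strictly increase along a path starting from a dist-minimal vertex -/
lemma myIncr (hT : T.IsTree) (r : V) {m t : V} (p : T.Walk m t) (hp : p.IsPath)
    (hmin : ∀ y ∈ p.support, T.dist r m ≤ T.dist r y) :
    ∀ j ≤ p.length, T.dist r (p.getVert j) = T.dist r m + j := by
  intro j
  induction j using Nat.strong_induction_on with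
  | _ j ih =>
    intro hj
    match j with
    | 0 => simp
    | j + 1 =>
      have hlt : j < p.length := by omega
      have hadj := p.adj_getVert_succ hlt
      have hdj : T.dist r (p.getVert j) = T.dist r m + j := ih j (by omega) (by omega)
      rcases myAdjDist hT r hadj with hdown | hup
      · -- d (getVert (j+1)) + 1 = d (getVert j)
        exfalso
        match j with
        | 0 =>
          have hmem : p.getVert 1 ∈ p.support :=
            SimpleGraph.Walk.mem_support_iff_exists_getVert.2 ⟨1, rfl, by omega⟩
          have := hmin _ hmem
          simp only [SimpleGraph.Walk.getVert_zero, Nat.zero_add] at hdown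
          omega
        | jj + 1 =>
          have hdjj : T.dist r (p.getVert jj) = T.dist r m + jj := ih jj (by omega) (by omega)
          have hadj' := p.adj_getVert_succ (show jj < p.length by omega)
          have heqv : p.getVert jj = p.getVert (jj + 2) := by
            apply myParentUniq hT r hadj' ((p.adj_getVert_succ (show jj+1 < p.length by omega)).symm)
            · omega
            · omega
          have := myGetVertInj hp jj (by omega) (jj+2) (by omega) heqv
          omega
      · omega

/-- in a connected induced subgraph, any two vertices are joined by a path inside it -/
lemma myPathIn {W : Set V} (hW : (T.induce W).Connected) {a b : V} (ha : a ∈ W) (hb : b ∈ W) :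
    ∃ p : T.Walk a b, p.IsPath ∧ ∀ y ∈ p.support, y ∈ W := by
  classical
  obtain ⟨w⟩ := hW.preconnected ⟨a, ha⟩ ⟨b, hb⟩
  let f : T.induce W →g T := (SimpleGraph.Embedding.induce W).toHom
  have hw : ∀ y ∈ (w.map f).support, y ∈ W := by
    intro y hy
    rw [SimpleGraph.Walk.support_map, List.mem_map] at hy
    obtain ⟨z, _, rfl⟩ := hy
    exact z.2
  refine ⟨(w.map f).bypass, SimpleGraph.Walk.bypass_isPath _, fun y hy => hw y ?_⟩
  exact SimpleGraph.Walk.support_bypass_subset _ hy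

open Classical in
/-- parent of a vertex: neighbor one step closer to the root -/
noncomputable def myPar (T : SimpleGraph V) (r : V) (z : V) : V :=
  if h : ∃ y, T.Adj y z ∧ T.dist r y + 1 = T.dist r z then h.choose else z

lemma myPar_eq (hT : T.IsTree) (r : V) {z y : V} (hy : T.Adj y z)
    (hd : T.dist r y + 1 = T.dist r z) : myPar T r z = y := by
  have h : ∃ y, T.Adj y z ∧ T.dist r y + 1 = T.dist r z := ⟨y, hy, hd⟩
  rw [myPar, dif_pos h]
  exact myParentUniq hT r h.choose_spec.1 hy h.choose_spec.2 hd

/-- within a connected set W with dist-minimal element m, the parent of any other element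
stays in W -/
lemma myStepW (hT : T.IsTree) (r : V) {W : Set V} (hW : (T.induce W).Connected)
    {m : V} (hm : m ∈ W) (hmin : ∀ t ∈ W, T.dist r m ≤ T.dist r t)
    {z : V} (hz : z ∈ W) (hne : z ≠ m) :
    myPar T r z ∈ W ∧ T.dist r (myPar T r z) + 1 = T.dist r z ∧ T.dist r m < T.dist r z := by
  obtain ⟨p, hp, hsupp⟩ := myPathIn hW hm hz
  have hincr := myIncr hT r p hp (fun y hy => hmin y (hsupp y hy))
  have hlen : 1 ≤ p.length := by
    rcases Nat.eq_zero_or_pos p.length with h0 | h1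
    · exact absurd (SimpleGraph.Walk.eq_of_length_eq_zero h0).symm hne
    · exact h1
  have hgoal : T.dist r (p.getVert (p.length - 1)) + 1 = T.dist r z := by
    have h1 := hincr (p.length - 1) (by omega)
    have h2 := hincr p.length le_rfl
    rw [SimpleGraph.Walk.getVert_length] at h2
    omega
  have hadj : T.Adj (p.getVert (p.length - 1)) z := by
    have := p.adj_getVert_succ (show p.length - 1 < p.length by omega)
    rw [show p.length - 1 + 1 = p.length by omega, SimpleGraph.Walk.getVert_length] at this
    exact this
  have hpar := myPar_eq hT r hadj hgoal
  rw [hpar]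
  refine ⟨hsupp _ (SimpleGraph.Walk.mem_support_iff_exists_getVert.2 ⟨p.length - 1, rfl, by omega⟩),
    hgoal, ?_⟩
  have h2 := hincr p.length le_rfl
  rw [SimpleGraph.Walk.getVert_length] at h2
  omega

lemma myChainW (hT : T.IsTree) (r : V) {W : Set V} (hW : (T.induce W).Connected)
    {m : V} (hm : m ∈ W) (hmin : ∀ t ∈ W, T.dist r m ≤ T.dist r t)
    {t : V} (ht : t ∈ W) :
    ∀ j, j + T.dist r m ≤ T.dist r t →
      (myPar T r)^[j] t ∈ W ∧ T.dist r ((myPar T r)^[j] t) + j = T.dist r t := by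
  intro j
  induction j with
  | zero => intro _; simpa using ht
  | succ j ih =>
    intro hj
    obtain ⟨hmem, hd⟩ := ih (by omega)
    have hne : (myPar T r)^[j] t ≠ m := by
      intro heq; rw [heq] at hd; omega
    obtain ⟨h1, h2, _⟩ := myStepW hT r hW hm hmin hmem hne
    rw [Function.iterate_succ_apply']
    exact ⟨h1, by omega⟩

lemma myReach (hT : T.IsTree) (r : V) {W : Set V} (hW : (T.induce W).Connected)
    {m : V} (hm : m ∈ W) (hmin : ∀ t ∈ W, T.dist r m ≤ T.dist r t)
    {t : V} (ht : t ∈ W) :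
    (myPar T r)^[T.dist r t - T.dist r m] t = m := by
  have hle := hmin t ht
  obtain ⟨hmem, hd⟩ := myChainW hT r hW hm hmin ht (T.dist r t - T.dist r m) (by omega)
  by_contra hne
  have := (myStepW hT r hW hm hmin hmem hne).2.2
  omega

/-- MAIN: if m, m' are dist-minimal in connected sets W, W' sharing a point t,
and dist m' ≤ dist m, then m ∈ W'. -/
lemma myMain (hT : T.IsTree) (r : V) {W W' : Set V}
    (hW : (T.induce W).Connected) (hW' : (T.induce W').Connected)
    {m m' : V} (hm : m ∈ W) (hmin : ∀ t ∈ W, T.dist r m ≤ T.dist r t)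
    (hm' : m' ∈ W') (hmin' : ∀ t ∈ W', T.dist r m' ≤ T.dist r t)
    {t : V} (ht : t ∈ W) (ht' : t ∈ W')
    (hle : T.dist r m' ≤ T.dist r m) : m ∈ W' := by
  have h1 : (myPar T r)^[T.dist r t - T.dist r m] t = m := myReach hT r hW hm hmin ht
  have h2 := (myChainW hT r hW' hm' hmin' ht' (T.dist r t - T.dist r m)
    (by have := hmin t ht; omega)).1
  rwa [h1] at h2
end MyTree
section SD
variable {I S : Type*}

/-- minimal element of a finite nonempty set under a strict total order -/
lemma myExistsMin {α : Type*} (r : α → α → Prop) (hr : IsStrictTotalOrder α r)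
    (A : Finset α) (hA : A.Nonempty) : ∃ b ∈ A, ∀ x ∈ A, x ≠ b → r b x := by
  classical
  induction A using Finset.induction_on with
  | empty => exact absurd hA (by simp)
  | @insert a s ha ih =>
    rcases s.eq_empty_or_nonempty with rfl | hs
    · exact ⟨a, by simp, by simp⟩
    · obtain ⟨b, hb, hbmin⟩ := ih hs
      have hab : a ≠ b := fun h => ha (h ▸ hb)
      rcases (haveI := hr; trichotomous_of r a b) with hab' | h | hba
      · refine ⟨a, Finset.mem_insert_self _ _, ?_⟩
        intro x hx hxa
        rcases Finset.mem_insert.1 hx with rfl | hxs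
        · exact absurd rfl hxa
        · rcases eq_or_ne x b with rfl | hxb
          · exact hab'
          · exact hr.trans _ _ _ hab' (hbmin x hxs hxb)
      · exact absurd h hab
      · refine ⟨b, Finset.mem_insert_of_mem hb, ?_⟩
        intro x hx hxb
        rcases Finset.mem_insert.1 hx with rfl | hxs
        · exact hba
        · exact hbmin x hxs hxb

open Classical in
/-- pick the most preferred element of A w.r.t. a strict order r (r b x: b preferred) -/
noncomputable def myPick (r : Option S → Option S → Prop) (A : Finset (Option S)) : Option S :=
  if h : ∃ b ∈ A, ∀ x ∈ A, x ≠ b → r b x then h.choose else none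

lemma myPick_mem {r : Option S → Option S → Prop} {A : Finset (Option S)}
    (h0 : (none : Option S) ∈ A) : myPick r A ∈ A := by
  rw [myPick]
  split
  · next h => exact h.choose_spec.1
  · exact h0

lemma myPick_spec {r : Option S → Option S → Prop} (hr : IsStrictTotalOrder (Option S) r)
    {A : Finset (Option S)} (h0 : (none : Option S) ∈ A) :
    myPick r A ∈ A ∧ ∀ x ∈ A, x ≠ myPick r A → r (myPick r A) x := by
  have h : ∃ b ∈ A, ∀ x ∈ A, x ≠ b → r b x := myExistsMin r hr A ⟨none, h0⟩
  rw [myPick, dif_pos h]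
  exact ⟨h.choose_spec.1, h.choose_spec.2⟩

variable [Fintype I] [Fintype S]

noncomputable local instance myDecEqI : DecidableEq I := Classical.decEq I
noncomputable local instance myDecEqOS : DecidableEq (Option S) := Classical.decEq _
noncomputable local instance myDecEqS : DecidableEq S := Classical.decEq S

/-- number of students assigned to school s -/
noncomputable def myCnt (μ : I → Option S) (s : S) : ℕ := {i | μ i = some s}.ncard

/-- available options given current partial assignment -/
noncomputable def myAvail (q : S → ℕ) (μ : I → Option S) : Finset (Option S) :=
  insert none ((Finset.univ.filter fun s => myCnt μ s < q s).image some)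

lemma myAvail_none (q : S → ℕ) (μ : I → Option S) : (none : Option S) ∈ myAvail q μ :=
  Finset.mem_insert_self _ _

lemma myAvail_some {q : S → ℕ} {μ : I → Option S} {s : S} :
    some s ∈ myAvail q μ ↔ myCnt μ s < q s := by
  classical
  simp [myAvail]

/-- serial dictatorship: process students in the given list order -/
noncomputable def mySD (q : S → ℕ) (pI : StudentPrefs I S) :
    List I → (I → Option S) → (I → Option S)
  | [], μ => μ
  | i :: L, μ => mySD q pI L (Function.update μ i (myPick (pI i) (myAvail q μ)))

lemma mySD_notmem (q : S → ℕ) (pI : StudentPrefs I S) :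
    ∀ (L : List I) (μ : I → Option S) (j : I), j ∉ L → mySD q pI L μ j = μ j := by
  classical
  intro L
  induction L with
  | nil => intro μ j _; rfl
  | cons i L ih =>
    intro μ j hj
    rw [mySD, ih _ _ (fun h => hj (List.mem_cons_of_mem _ h)),
      Function.update_of_ne (fun h => hj (by rw [h]; exact List.mem_cons_self))]

lemma mySD_append (q : S → ℕ) (pI : StudentPrefs I S) :
    ∀ (L1 L2 : List I) (μ : I → Option S),
      mySD q pI (L1 ++ L2) μ = mySD q pI L2 (mySD q pI L1 μ) := by
  intro L1
  induction L1 with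
  | nil => intro L2 μ; rfl
  | cons i L ih => intro L2 μ; rw [List.cons_append, mySD, mySD, ih]

lemma mySD_congr (q : S → ℕ) (pI pI' : StudentPrefs I S) :
    ∀ (L : List I) (μ : I → Option S), (∀ j ∈ L, pI j = pI' j) →
      mySD q pI L μ = mySD q pI' L μ := by
  intro L
  induction L with
  | nil => intro μ _; rfl
  | cons i L ih =>
    intro μ h
    rw [mySD, mySD, h i (List.mem_cons_self),
      ih _ (fun j hj => h j (List.mem_cons_of_mem _ hj))]


lemma myCnt_update_none {μ : I → Option S} {i : I} (hi : μ i = none) (s : S) :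
    myCnt (Function.update μ i (none : Option S)) s = myCnt μ s := by
  have : Function.update μ i (none : Option S) = μ := by
    funext j
    rcases eq_or_ne j i with rfl | h
    · rw [Function.update_self, hi]
    · rw [Function.update_of_ne h]
  rw [this]

lemma myCnt_update_some {μ : I → Option S} {i : I} (hi : μ i = none) (s₀ s : S) :
    myCnt (Function.update μ i (some s₀)) s =
      if s = s₀ then myCnt μ s + 1 else myCnt μ s := by
  split
  · next heq =>
    subst heq
    have hset : {j | Function.update μ i (some s) j = some s} = insert i {j | μ j = some s} := by
      ext j
      rcases eq_or_ne j i with rfl | h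
      · simp [Function.update_self]
      · simp [Function.update_of_ne h, h]
    rw [myCnt, hset, Set.ncard_insert_of_notMem (by simp [hi]) (Set.toFinite _)]
    rfl
  · next hne =>
    have hset : {j | Function.update μ i (some s₀) j = some s} = {j | μ j = some s} := by
      ext j
      rcases eq_or_ne j i with rfl | h
      · simp only [Set.mem_setOf_eq, Function.update_self, hi]
        constructor
        · intro h; exact absurd (Option.some_injective _ h).symm hne
        · intro h; exact absurd h (by simp)
      · simp [Function.update_of_ne h]
    rw [myCnt, hset]; rfl

/-- feasibility is preserved by the serial dictatorship run -/
lemma mySD_feasible (q : S → ℕ) (pI : StudentPrefs I S) :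
    ∀ (L : List I) (μ : I → Option S), L.Nodup → (∀ j ∈ L, μ j = none) →
      (∀ s, myCnt μ s ≤ q s) → ∀ s, myCnt (mySD q pI L μ) s ≤ q s := by
  intro L
  induction L with
  | nil => intro μ _ _ h s; exact h s
  | cons i L ih =>
    intro μ hnd hnone hfeas s
    have hi : μ i = none := hnone i (List.mem_cons_self)
    rw [mySD]
    have hmem := myPick_mem (r := pI i) (myAvail_none q μ)
    set b := myPick (pI i) (myAvail q μ) with hb
    apply ih
    · exact (List.nodup_cons.1 hnd).2
    · intro j hj
      rw [Function.update_of_ne (fun h => (List.nodup_cons.1 hnd).1 (by rw [← h]; exact hj))]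
      exact hnone j (List.mem_cons_of_mem _ hj)
    · intro s'
      match hb2 : b with
      | none => rw [myCnt_update_none hi]; exact hfeas s'
      | some s₀ =>
        rw [myCnt_update_some hi]
        split
        · next heq =>
          subst heq
          have : myCnt μ s' < q s' := myAvail_some.1 (hb2 ▸ hmem)
          omega
        · exact hfeas s'

end SD

lemma myFirstWith {α : Type*} (p : α → Prop) :
    ∀ (L : List α), (∃ j ∈ L, p j) →
      ∃ P i Q, L = P ++ i :: Q ∧ p i ∧ ∀ j ∈ P, ¬ p j := by
  classical
  intro L
  induction L with
  | nil => rintro ⟨j, hj, _⟩; simp at hj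
  | cons a L ih =>
    intro h
    by_cases ha : p a
    · exact ⟨[], a, L, rfl, ha, by simp⟩
    · obtain ⟨j, hj, hpj⟩ := h
      have hjL : j ∈ L := by
        rcases List.mem_cons.1 hj with rfl | h'
        · exact absurd hpj ha
        · exact h'
      obtain ⟨P, i, Q, hL, hpi, hP⟩ := ih ⟨j, hjL, hpj⟩
      refine ⟨a :: P, i, Q, by rw [hL]; rfl, hpi, ?_⟩
      intro x hx
      rcases List.mem_cons.1 hx with rfl | hx'
      · exact ha
      · exact hP x hx'

lemma mySplitFacts {α : Type*} {L P Q : List α} {i : α} (h : L = P ++ i :: Q)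
    (hnd : L.Nodup) : i ∉ P ∧ i ∉ Q ∧ ∀ j ∈ P, j ∉ i :: Q := by
  subst h
  rw [List.nodup_append] at hnd
  obtain ⟨_, hndQ, hdisj⟩ := hnd
  rw [List.nodup_cons] at hndQ
  refine ⟨fun h => hdisj i h i (List.mem_cons_self) rfl, hndQ.1, ?_⟩
  intro j hj hj'
  exact hdisj j hj j hj' rfl

lemma mySTOasymm {α : Type*} {r : α → α → Prop} (h : IsStrictTotalOrder α r) {a b : α}
    (h1 : r a b) (h2 : r b a) : False := by
  haveI := h
  exact (irrefl_of r a) (trans_of r h1 h2)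

section SDmore
set_option linter.unusedSectionVars false
variable {I S : Type*} [Fintype I] [Fintype S]

lemma mySD_char (q : S → ℕ) (pI : StudentPrefs I S) {L P Q : List I} {i : I}
    (hL : L = P ++ i :: Q) (hiQ : i ∉ Q) (μ0 : I → Option S) :
    mySD q pI L μ0 i = myPick (pI i) (myAvail q (mySD q pI P μ0)) := by
  classical
  subst hL
  rw [mySD_append, mySD, mySD_notmem _ _ _ _ _ hiQ, Function.update_self]

lemma mySD_persist (q : S → ℕ) (pI : StudentPrefs I S) {L P Q : List I}
    (hL : L = P ++ Q) (μ0 : I → Option S) {j : I} (hjQ : j ∉ Q) :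
    mySD q pI L μ0 j = mySD q pI P μ0 j := by
  subst hL
  rw [mySD_append, mySD_notmem _ _ _ _ _ hjQ]

end SDmore


/-- for any fixed schools' preferences, quotas, and acquaintance graph of
treewidth at most `k`, there exists a strategyproof mechanism whose output matching is
always feasible, Pareto efficient, and locally EF-k. -/
theorem sp_pe_locef_mechanism_treewidth {I S : Type*} [Fintype I] [Fintype S] [Nonempty I]
    (k : ℕ) (G : SimpleGraph I) (hG : TreewidthAtMost G k)
    (pS : SchoolPrefs I S) (q : S → ℕ) (hpS : ValidSchoolPrefs pS) :
    ∃ f : StudentPrefs I S → (I → Option S),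
      (∀ pI, ValidStudentPrefs pI → Feasible q (f pI)) ∧
      Strategyproof f ∧
      ∀ pI, ValidStudentPrefs pI →
        ParetoEfficient pI q (f pI) ∧ LocEF G pI pS k (f pI) := by
  classical
  obtain ⟨V, T, bag, hVfin, hdec, hbag⟩ := hG
  have hVne : Nonempty V := ⟨(hdec.covers (Classical.arbitrary I)).choose⟩
  let r : V := Classical.arbitrary V
  have hex : ∀ i : I, ∃ t, i ∈ bag t ∧ ∀ t' ∈ {t | i ∈ bag t}, T.dist r t ≤ T.dist r t' := by
    intro i
    obtain ⟨t0, ht0⟩ := hdec.covers i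
    obtain ⟨t, ht, hmin⟩ := Set.exists_min_image {t | i ∈ bag t} (fun t => T.dist r t)
      (Set.toFinite _) ⟨t0, ht0⟩
    exact ⟨t, ht, hmin⟩
  choose m hmW hmMin using hex
  set key : I → ℕ := fun i => T.dist r (m i) with hkeydef
  have hmain : ∀ i i', G.Adj i i' → key i' ≤ key i → i' ∈ bag (m i) := by
    intro i i' hadj hle
    obtain ⟨t, hti, hti'⟩ := hdec.edges hadj
    exact myMain hdec.tree r (hdec.subtree i) (hdec.subtree i')
      (hmW i) (hmMin i) (hmW i') (hmMin i') hti hti' hle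
  -- linear order on students: ascending key, ties broken by an injection
  let enc : I → ℕ := fun i => (Fintype.equivFin I i : ℕ)
  have hencInj : Function.Injective enc := fun a b h =>
    (Fintype.equivFin I).injective (Fin.ext h)
  let rel : I → I → Prop := fun a b => key a < key b ∨ (key a = key b ∧ enc a ≤ enc b)
  haveI : DecidableRel rel := Classical.decRel _
  haveI : IsTrans I rel := ⟨by
    rintro a b c (h1 | ⟨h1, h1'⟩) (h2 | ⟨h2, h2'⟩)
    · exact Or.inl (by omega)
    · exact Or.inl (by omega)
    · exact Or.inl (by omega)
    · exact Or.inr ⟨by omega, le_trans h1' h2'⟩⟩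
  haveI : IsAntisymm I rel := ⟨by
    rintro a b (h1 | ⟨h1, h1'⟩) (h2 | ⟨h2, h2'⟩)
    · omega
    · omega
    · omega
    · exact hencInj (le_antisymm h1' h2')⟩
  haveI : IsTotal I rel := ⟨by
    intro a b
    rcases lt_trichotomy (key a) (key b) with h | h | h
    · exact Or.inl (Or.inl h)
    · rcases le_total (enc a) (enc b) with h' | h'
      · exact Or.inl (Or.inr ⟨h, h'⟩)
      · exact Or.inr (Or.inr ⟨h.symm, h'⟩)
    · exact Or.inr (Or.inl h)⟩
  set LI : List I := Finset.sort Finset.univ rel with hLIdef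
  have hnodup : LI.Nodup := Finset.sort_nodup (s := Finset.univ) (r := rel)
  have hLImem : ∀ i : I, i ∈ LI := fun i => (Finset.mem_sort (r := rel)).2 (Finset.mem_univ i)
  have hsorted : List.Pairwise rel LI := Finset.pairwise_sort (s := Finset.univ) (r := rel)
  refine ⟨fun pI => mySD q pI LI (fun _ => none), ?_, ?_, ?_⟩
  · -- feasibility
    intro pI _ s
    exact mySD_feasible q pI LI (fun _ => none) hnodup (fun _ _ => rfl)
      (fun s' => by
        have : {i : I | (none : Option S) = some s'} = ∅ := by ext i; simp
        simp [myCnt, this]) s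
  · -- strategyproofness
    intro pI hpI i pI' hpI' hdiff
    obtain ⟨P, Q, hsplit⟩ := List.append_of_mem (hLImem i)
    obtain ⟨hiP, hiQ, _⟩ := mySplitFacts hsplit hnodup
    have hPeq : mySD q pI P (fun _ => none) = mySD q pI' P (fun _ => none) :=
      mySD_congr q pI pI' P _ (fun j hj => (hdiff j (fun h => hiP (h ▸ hj))).symm)
    have h1 : mySD q pI LI (fun _ => none) i
        = myPick (pI i) (myAvail q (mySD q pI P (fun _ => none))) :=
      mySD_char q pI hsplit hiQ _
    have h2 : mySD q pI' LI (fun _ => none) i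
        = myPick (pI' i) (myAvail q (mySD q pI P (fun _ => none))) := by
      rw [mySD_char q pI' hsplit hiQ _, hPeq]
    have hspec := myPick_spec (hpI i) (myAvail_none q (mySD q pI P (fun _ => none)))
    have hmem : myPick (pI' i) (myAvail q (mySD q pI P (fun _ => none)))
        ∈ myAvail q (mySD q pI P (fun _ => none)) := myPick_mem (myAvail_none q _)
    show mySD q pI LI (fun _ => none) i = mySD q pI' LI (fun _ => none) i ∨
      pI i (mySD q pI LI (fun _ => none) i) (mySD q pI' LI (fun _ => none) i)
    rw [h1, h2]
    rcases eq_or_ne (myPick (pI i) (myAvail q (mySD q pI P (fun _ => none))))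
      (myPick (pI' i) (myAvail q (mySD q pI P (fun _ => none)))) with he | hne
    · exact Or.inl he
    · exact Or.inr (hspec.2 _ hmem (Ne.symm hne))
  · -- Pareto efficiency and LocEF
    intro pI hpI
    set μ : I → Option S := mySD q pI LI (fun _ => none) with hμdef
    have hmufeas : ∀ s, myCnt μ s ≤ q s :=
      mySD_feasible q pI LI (fun _ => none) hnodup (fun _ _ => rfl)
        (fun s' => by
          have : {i : I | (none : Option S) = some s'} = ∅ := by ext i; simp
          simp [myCnt, this])
    constructor
    · -- Pareto efficiency
      intro μ' hfeas hdom
      obtain ⟨hweak, i0, hstrict⟩ := hdom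
      by_cases hall : ∀ j, μ' j = μ j
      · rw [hall i0] at hstrict
        exact mySTOasymm (hpI i0) hstrict hstrict
      · push_neg at hall
        obtain ⟨j0, hj0⟩ := hall
        obtain ⟨P, i, Q, hsplit, hpi, hPfirst⟩ :=
          myFirstWith (fun j => μ' j ≠ μ j) LI ⟨j0, hLImem j0, hj0⟩
        obtain ⟨hiP, hiQ, hPdisj⟩ := mySplitFacts hsplit hnodup
        set ν : I → Option S := mySD q pI P (fun _ => none) with hνdef
        have hν0 : ∀ j, j ∉ P → ν j = none := fun j hj => mySD_notmem q pI P _ j hj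
        have hmuP : ∀ j ∈ P, μ j = ν j := fun j hj =>
          mySD_persist q pI hsplit _ (hPdisj j hj)
        have hsub : ∀ s j, ν j = some s → μ' j = some s := by
          intro s j hj
          by_cases hjP : j ∈ P
          · have h' := hPfirst j hjP
            push_neg at h'
            rw [h', hmuP j hjP, hj]
          · rw [hν0 j hjP] at hj; exact absurd hj (by simp)
        have hAmem : μ' i ∈ myAvail q ν := by
          cases hmi : μ' i with
          | none => exact myAvail_none q ν
          | some s =>
            rw [myAvail_some]
            have hsub2 : insert i {j | ν j = some s} ⊆ {j | μ' j = some s} := by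
              intro j hj
              rcases Set.mem_insert_iff.1 hj with rfl | hj
              · exact hmi
              · exact hsub s j hj
            have hnotin : i ∉ {j | ν j = some s} := by
              intro h
              rw [Set.mem_setOf_eq, hν0 i hiP] at h
              exact absurd h (by simp)
            have h1 : myCnt ν s + 1 ≤ {j | μ' j = some s}.ncard := by
              rw [myCnt, ← Set.ncard_insert_of_notMem hnotin (Set.toFinite _)]
              exact Set.ncard_le_ncard hsub2 (Set.toFinite _)
            have h2 : {j | μ' j = some s}.ncard ≤ q s := hfeas s
            omega
        have hchar : μ i = myPick (pI i) (myAvail q ν) := mySD_char q pI hsplit hiQ _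
        have hspec := myPick_spec (hpI i) (myAvail_none q ν)
        have hlt : pI i (μ i) (μ' i) := by
          rw [hchar]
          exact hspec.2 _ hAmem (by rw [← hchar]; exact hpi)
        rcases hweak i with heq | hlt'
        · exact hpi heq
        · exact mySTOasymm (hpI i) hlt hlt'
    · -- LocEF
      intro i
      show {i' | LocalEnvy G pI pS μ i i'}.ncard ≤ k
      obtain ⟨P, Q, hsplit⟩ := List.append_of_mem (hLImem i)
      obtain ⟨hiP, hiQ, hPdisj⟩ := mySplitFacts hsplit hnodup
      set ν : I → Option S := mySD q pI P (fun _ => none) with hνdef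
      have hν0 : ∀ j, j ∉ P → ν j = none := fun j hj => mySD_notmem q pI P _ j hj
      have hchar : μ i = myPick (pI i) (myAvail q ν) := mySD_char q pI hsplit hiQ _
      have hspec := myPick_spec (hpI i) (myAvail_none q ν)
      have hEnvySub : {i' | LocalEnvy G pI pS μ i i'} ⊆ bag (m i) \ {i} := by
        rintro i' ⟨⟨s, hs, hpref, -⟩, hadj⟩
        have hne : i' ≠ i := by
          rintro rfl
          rw [hs] at hpref
          exact mySTOasymm (hpI i') hpref hpref
        have hiP' : i' ∈ P := by
          by_contra hnotP
          by_cases hsA : some s ∈ myAvail q ν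
          · rcases eq_or_ne (some s) (μ i) with he | hne2
            · rw [← he] at hpref
              exact mySTOasymm (hpI i) hpref hpref
            · have h' : pI i (μ i) (some s) := by
                rw [hchar]
                exact hspec.2 _ hsA (by rw [← hchar]; exact hne2)
              exact mySTOasymm (hpI i) hpref h'
          · rw [myAvail_some] at hsA
            push_neg at hsA
            have hsub2 : insert i' {j | ν j = some s} ⊆ {j | μ j = some s} := by
              intro j hj
              rcases Set.mem_insert_iff.1 hj with rfl | hj
              · exact hs
              · have hjP : j ∈ P := by
                  by_contra h
                  rw [Set.mem_setOf_eq, hν0 j h] at hj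
                  exact absurd hj (by simp)
                have hper : μ j = ν j :=
                  mySD_persist q pI hsplit (fun _ => none) (hPdisj j hjP)
                show μ j = some s
                rw [hper]
                exact hj
            have hnotin : i' ∉ {j | ν j = some s} := by
              intro h
              rw [Set.mem_setOf_eq, hν0 i' hnotP] at h
              exact absurd h (by simp)
            have h1 : myCnt ν s + 1 ≤ {j | μ j = some s}.ncard := by
              rw [myCnt, ← Set.ncard_insert_of_notMem hnotin (Set.toFinite _)]
              exact Set.ncard_le_ncard hsub2 (Set.toFinite _)
            have h2 : {j | μ j = some s}.ncard ≤ q s := hmufeas s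
            omega
        have hrel : rel i' i := by
          have hso := hsorted
          rw [hsplit] at hso
          exact (List.pairwise_append.1 hso).2.2 i' hiP' i (List.mem_cons_self)
        have hkle : key i' ≤ key i := by
          rcases hrel with h | ⟨h, _⟩
          · omega
          · omega
        exact ⟨hmain i i' hadj hkle, hne⟩
      have hb1 : (bag (m i) \ {i}).ncard + 1 = (bag (m i)).ncard :=
        Set.ncard_diff_singleton_add_one (hmW i) (Set.toFinite _)
      have hb2 : (bag (m i)).ncard ≤ k + 1 := hbag (m i)
      have hb3 := Set.ncard_le_ncard hEnvySub (Set.toFinite _)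
      omega
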